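/- Let f : F_q → F_q be a bijection given by a polynomial of odd degree with f(−a) = −f(a) for all a, and define the F_q × F_q complex matrix M by M_{x,y} = (1/q) ∑_{a ∈ F_q} ζ_p^{tr(f(a)y − ax)}. Then M is a real orthogonal matrix: M M^⊤ = I. -/

import Mathlib

/-- For an odd permutation polynomial bijection `f` of `F_q`, the matrix
`M_{x,y} = (1/q) ∑_a ζ_p^{tr(f(a)y - ax)}` is a real orthogonal matrix. -/
theorem matrix_M_is_real_orthogonal
    (p : ℕ) [Fact p.Prime]
    (F : Type*) [Field F] [Fintype F] [DecidableEq F] [Algebra (ZMod p) F]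
    (f : F → F) (hf : Function.Bijective f) (hodd : ∀ a : F, f (-a) = -f a)
    (P : Polynomial F) (hdeg : Odd P.natDegree) (hP : ∀ x : F, P.eval x = f x) :
    letI ζ : ℂ := Complex.exp (2 * Real.pi * Complex.I / p)
    letI M : Matrix F F ℂ := fun x y => (1 / (Fintype.card F : ℂ)) *
      ∑ a : F, ζ ^ (Algebra.trace (ZMod p) F (f a * y - a * x)).val
    M * M.transpose = 1 ∧ ∀ x y : F, (M x y).im = 0 := by
  set ζ : ℂ := Complex.exp (2 * Real.pi * Complex.I / p) with hζdef
  set M : Matrix F F ℂ := fun x y => (1 / (Fintype.card F : ℂ)) *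
      ∑ a : F, ζ ^ (Algebra.trace (ZMod p) F (f a * y - a * x)).val with hMdef
  have hp : p.Prime := Fact.out
  have hζ : IsPrimitiveRoot ζ p := Complex.isPrimitiveRoot_exp p hp.ne_zero
  set ψ : AddChar (ZMod p) ℂ := AddChar.zmodChar p hζ.pow_eq_one with hψdef
  set Ψ : AddChar F ℂ := ψ.compAddMonoidHom (Algebra.trace (ZMod p) F).toAddMonoidHom with hΨdef
  have hΨ : ∀ s : F, Ψ s = ζ ^ (Algebra.trace (ZMod p) F s).val := fun s => rfl
  have hψprim : ψ.IsPrimitive := AddChar.zmodChar_primitive_of_primitive_root p hζ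
  have hΨprim : Ψ.IsPrimitive := by
    apply AddChar.IsPrimitive.of_ne_one
    have htr : ∃ a : F, Algebra.trace (ZMod p) F a ≠ 0 := by
      by_contra hcon
      push_neg at hcon
      have hnd := traceForm_nondegenerate (ZMod p) F
      exact one_ne_zero (hnd.1 1 fun n => by simp [Algebra.traceForm_apply, hcon])
    obtain ⟨a, ha⟩ := htr
    exact AddChar.ne_one_iff.2
      ⟨a, fun hcontra => ha ((hψprim.zmod_char_eq_one_iff p _).mp hcontra)⟩
  set q : ℂ := (Fintype.card F : ℂ) with hqdef
  have hq : q ≠ 0 := Nat.cast_ne_zero.2 Fintype.card_ne_zero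
  have hM : ∀ x y, M x y = (1 / q) * ∑ a : F, Ψ (f a * y - a * x) := by
    intro x y
    simp only [hΨ]
    rfl
  have hsum : ∀ c : F, (∑ a : F, Ψ (a * c)) = if c = 0 then q else 0 := by
    intro c
    rw [AddChar.sum_mulShift c hΨprim]
    simp only [Nat.cast_ite, Nat.cast_zero]
    rfl
  -- the key computation
  have step : ∀ x z : F, (∑ y : F, M x y * M z y) = if x = z then 1 else 0 := by
    intro x z
    have expand : ∀ y : F, M x y * M z y
        = (1 / q) * (1 / q) *
          ∑ a : F, ∑ b : F, Ψ ((f a + f b) * y + (-(a * x) + -(b * z))) := by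
      intro y
      rw [hM x y, hM z y, mul_mul_mul_comm, Finset.sum_mul_sum]
      congr 1
      refine Finset.sum_congr rfl fun a _ => Finset.sum_congr rfl fun b _ => ?_
      rw [← AddChar.map_add_eq_mul]
      congr 1
      ring
    calc (∑ y : F, M x y * M z y)
        = (1 / q) * (1 / q) *
            ∑ a : F, ∑ b : F, ∑ y : F, Ψ ((f a + f b) * y + (-(a * x) + -(b * z))) := by
          simp_rw [expand, ← Finset.mul_sum]
          congr 1
          rw [Finset.sum_comm]
          exact Finset.sum_congr rfl fun a _ => Finset.sum_comm
      _ = (1 / q) * (1 / q) *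
            ∑ a : F, ∑ b : F, (if f a + f b = 0 then q else 0) * Ψ (-(a * x) + -(b * z)) := by
          congr 1
          refine Finset.sum_congr rfl fun a _ => Finset.sum_congr rfl fun b _ => ?_
          simp_rw [AddChar.map_add_eq_mul, ← Finset.sum_mul]
          congr 1
          rw [show (∑ i : F, Ψ ((f a + f b) * i)) = ∑ i : F, Ψ (i * (f a + f b)) from
            Finset.sum_congr rfl fun i _ => by rw [mul_comm], hsum]
      _ = (1 / q) * (1 / q) * ∑ a : F, q * Ψ (-(a * x) + -((-a) * z)) := by
          congr 1
          refine Finset.sum_congr rfl fun a _ => ?_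
          rw [Finset.sum_eq_single (-a)]
          · rw [if_pos (by rw [hodd]; ring)]
          · intro b _ hb
            rw [if_neg, zero_mul]
            intro hcon
            apply hb
            have h1 : f b = f (-a) := by rw [hodd]; linear_combination hcon
            exact hf.injective h1
          · exact fun h => absurd (Finset.mem_univ _) h
      _ = (1 / q) * (1 / q) * (q * ∑ a : F, Ψ (a * (z - x))) := by
          congr 1
          rw [← Finset.mul_sum]
          congr 1
          exact Finset.sum_congr rfl fun a _ => by rw [show -(a * x) + -((-a) * z) = a * (z - x) by ring]
      _ = (1 / q) * ∑ a : F, Ψ (a * (z - x)) := by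
          field_simp
          exact Finset.sum_congr rfl fun a _ => by ring_nf
      _ = (1 / q) * (if z - x = 0 then q else 0) := by rw [hsum]
      _ = if x = z then 1 else 0 := by
          rcases eq_or_ne x z with h | h
          · rw [if_pos h, if_pos (by rw [h, sub_self]), one_div, inv_mul_cancel₀ hq]
          · rw [if_neg h, if_neg (sub_ne_zero.2 (Ne.symm h)), mul_zero]
  -- realness
  have hnorm : ‖ζ‖ = 1 := by simp [ζ, Complex.norm_exp]
  have hΨnorm : ∀ s : F, ‖Ψ s‖ = 1 := fun s => by
    rw [hΨ, norm_pow, hnorm, one_pow]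
  have hconjΨ : ∀ s : F, (starRingEnd ℂ) (Ψ s) = Ψ (-s) := fun s => by
    rw [AddChar.map_neg_eq_inv, Complex.inv_eq_conj (hΨnorm s)]
  have hreal : ∀ x y : F, (starRingEnd ℂ) (M x y) = M x y := by
    intro x y
    calc (starRingEnd ℂ) (M x y)
        = (1 / q) * ∑ a : F, Ψ (f (-a) * y - (-a) * x) := by
          rw [hM, map_mul, map_sum]
          congr 1
          · simp [hqdef]
          · refine Finset.sum_congr rfl fun a _ => ?_
            rw [hconjΨ]
            congr 1
            rw [hodd]
            ring
      _ = M x y := by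
          rw [hM]
          congr 1
          exact Fintype.sum_equiv (Equiv.neg F) _ _ (fun a => rfl)
  constructor
  · ext x z
    rw [Matrix.mul_apply, Matrix.one_apply]
    simpa [Matrix.transpose_apply] using step x z
  · intro x y
    exact Complex.conj_eq_iff_im.mp (hreal x y)
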